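/- Let A ⊆ {1,…,2n} be cyclically convex with |A| ≤ n and let B = {1,…,2n} ∖ A (so that for each 1 ≤ j ≤ n at least one of j, j+n lies in B). Let H ≤ G be the subgroup generated by ⋃_{i∈A}( Ȳ_i ∪ ⋃_{j=1}^{n} ⋃_{j' ∈ {j, j+n} ∩ B} Z̄^j_{i,j'} ). Then for every k ∈ B, the image pr^G_k(H) of H under the k-th coordinate projection equals s^{k*}_k(A_{k*}), the image of the section homomorphism s^{k*}_k : A_{k*} → G_k, where k* is the unique element of {k, k−n} ∩ {1,…,n}. -/
import Mathlib


namespace SB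

/-- `cc n p` is the 0-based boundary of the `p`-th label sequence:
`cc n p = ⌈p·n/3⌉` for `p ≤ 3`, and `cc n p = n + ⌈(p-3)·n/3⌉` for `p ≥ 3`. -/
def cc (n p : ℕ) : ℕ := if p < 3 then (p * n + 2) / 3 else n + ((p - 3) * n + 2) / 3

/-- The 0-based label sequence `α_{p+1}` (paper's `α_1,…,α_6` for `p = 0,…,5`)
as a finite set of coordinates in `Fin (2n)`. -/
def alphaF (n p : ℕ) : Finset (Fin (2 * n)) :=
  Finset.univ.filter (fun x => cc n p ≤ x.val ∧ x.val < cc n (p + 1))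

/-- The 0-based label sequence `α_{t+1}` (for `t < 3`) as a finite set of
indices in `Fin n` (indexing the factors `A_j`). -/
def alphaN (n t : ℕ) : Finset (Fin n) :=
  Finset.univ.filter (fun x => cc n t ≤ x.val ∧ x.val < cc n (t + 1))

/-- Reduction of a natural number modulo `2n`, as an element of `Fin (2n)`. -/
def idx {n : ℕ} (hn : 0 < n) (k : ℕ) : Fin (2 * n) := ⟨k % (2 * n), Nat.mod_lt _ (by omega)⟩

/-- Reduction of a natural number modulo `n`, as an element of `Fin n`
(this implements the paper's `j*`). -/
def idxN {n : ℕ} (hn : 0 < n) (k : ℕ) : Fin n := ⟨k % n, Nat.mod_lt _ hn⟩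

/-- The set `Ȳ_i` of vectorized kernel generators: `y ∈ Y i` placed in
coordinate `i` with identity elsewhere. -/
def Ybar {n : ℕ} {G : Fin (2 * n) → Type} [∀ i, Group (G i)]
    (Y : ∀ i, Set (G i)) (i : Fin (2 * n)) : Set (∀ i', G i') :=
  Pi.mulSingle i '' (Y i)

/-- The set `Z̄^j_{i,k}` of vectorized section generators: for `b ∈ A j`, the
element with `s j i b` in coordinate `i`, `s j k b⁻¹` in coordinate `k`, and
identity elsewhere. -/
def Zbar {n : ℕ} {A : Fin n → Type} [∀ j, CommGroup (A j)]
    {G : Fin (2 * n) → Type} [∀ i, Group (G i)]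
    (s : ∀ (j : Fin n) (i : Fin (2 * n)), A j →* G i)
    (j : Fin n) (i k : Fin (2 * n)) : Set (∀ i', G i') :=
  Set.range (fun b : A j => Pi.mulSingle i (s j i b) * Pi.mulSingle k (s j k b⁻¹))

theorem stmt_12
    (n : ℕ) (hn : 3 ≤ n)
    (A : Fin n → Type) [∀ j, CommGroup (A j)] [∀ j, Nontrivial (A j)]
    [∀ j, Module.Free ℤ (Additive (A j))] [∀ j, Module.Finite ℤ (Additive (A j))]
    (G : Fin (2 * n) → Type) [∀ i, Group (G i)]
    (φ : ∀ i, G i →* (∀ j, A j)) (hφ : ∀ i, Function.Surjective (φ i))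
    (s : ∀ (j : Fin n) (i : Fin (2 * n)), A j →* G i)
    (hs : ∀ j i a, φ i (s j i a) j = a)
    (Φ : (∀ i, G i) →* (∀ j, A j)) (hΦ : ∀ g, Φ g = ∏ i, φ i (g i))
    (Y : ∀ i, Set (G i)) (hYfin : ∀ i, (Y i).Finite)
    (hYker : ∀ i, ∀ y ∈ Y i, φ i y = 1)
    (hYgen : ∀ i, Subgroup.closure (Y i ∪ ⋃ j, Set.range (s j i)) = ⊤)
    (Aset : Finset (Fin (2 * n)))
    (hconv : ∃ (a ℓ : ℕ),
      Aset = (Finset.range (ℓ + 1)).image (fun t => idx (by omega : 0 < n) (a + t)))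
    (hcard : Aset.card ≤ n) :
    ∀ k : Fin (2 * n), k ∉ Aset →
      Subgroup.map (Pi.evalMonoidHom G k)
          (Subgroup.closure (⋃ i ∈ Aset,
            (Ybar Y i ∪ ⋃ j : Fin n, ⋃ j' ∈
                (({idx (by omega : 0 < n) j.val, idx (by omega : 0 < n) (j.val + n)} :
                    Finset (Fin (2 * n))) \ Aset),
              Zbar s j i j')))
        = MonoidHom.range (s (idxN (by omega : 0 < n) k.val) k) := by
  intro k hk
  have hn0 : 0 < n := by omega
  rw [MonoidHom.map_closure]
  have hkmod : (idxN hn0 k.val : ℕ) = k.val % n := rfl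
  apply le_antisymm
  · rw [Subgroup.closure_le]
    rintro x ⟨g, hg, rfl⟩
    simp only [Set.mem_iUnion, Set.mem_union] at hg
    obtain ⟨i, hi, hg⟩ := hg
    have hki : k ≠ i := fun h => hk (h ▸ hi)
    rcases hg with hg | hg
    · obtain ⟨y, _, rfl⟩ := hg
      have : (Pi.evalMonoidHom G k) (Pi.mulSingle i y) = 1 :=
        Pi.mulSingle_eq_of_ne hki y
      rw [this]
      exact one_mem _
    · obtain ⟨j, j', hj', b, rfl⟩ := hg
      rw [Finset.mem_sdiff] at hj'
      by_cases hkj : k = j'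
      · subst hkj
        have h1 : (Pi.evalMonoidHom G k)
            (Pi.mulSingle i (s j i b) * Pi.mulSingle k (s j k b⁻¹)) = s j k b⁻¹ := by
          simp [Pi.evalMonoidHom_apply, Pi.mulSingle_eq_of_ne hki]
        rw [h1]
        have hjk : idxN hn0 k.val = j := by
          have := hj'.1
          simp only [Finset.mem_insert, Finset.mem_singleton] at this
          apply Fin.ext
          rw [hkmod]
          rcases this with h | h
          · have : k.val = j.val % (2 * n) := congrArg Fin.val h
            have hjlt : (j : ℕ) < n := j.isLt
            rw [Nat.mod_eq_of_lt (by omega)] at this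
            rw [this, Nat.mod_eq_of_lt hjlt]
          · have : k.val = (j.val + n) % (2 * n) := congrArg Fin.val h
            have hjlt : (j : ℕ) < n := j.isLt
            rw [Nat.mod_eq_of_lt (by omega)] at this
            rw [this, Nat.add_mod_right, Nat.mod_eq_of_lt hjlt]
        rw [hjk]
        exact ⟨b⁻¹, rfl⟩
      · have h1 : (Pi.evalMonoidHom G k)
            (Pi.mulSingle i (s j i b) * Pi.mulSingle j' (s j j' b⁻¹)) = 1 := by
          simp [Pi.evalMonoidHom_apply, Pi.mulSingle_eq_of_ne hki,
            Pi.mulSingle_eq_of_ne hkj]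
        rw [h1]
        exact one_mem _
  · rintro x ⟨b, rfl⟩
    apply Subgroup.subset_closure
    obtain ⟨a0, ℓ, hAset⟩ := hconv
    have hi : idx hn0 (a0 + 0) ∈ Aset := by
      rw [hAset]
      exact Finset.mem_image.2 ⟨0, Finset.mem_range.2 (by omega), rfl⟩
    have hki : k ≠ idx hn0 (a0 + 0) := fun h => hk (h ▸ hi)
    refine ⟨Pi.mulSingle (idx hn0 (a0 + 0)) (s (idxN hn0 k.val) (idx hn0 (a0 + 0)) b⁻¹) *
      Pi.mulSingle k (s (idxN hn0 k.val) k b⁻¹⁻¹), ?_, ?_⟩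
    · simp only [Set.mem_iUnion, Set.mem_union]
      refine ⟨idx hn0 (a0 + 0), hi, Or.inr ⟨idxN hn0 k.val, k, ?_, b⁻¹, rfl⟩⟩
      rw [Finset.mem_sdiff]
      refine ⟨?_, hk⟩
      simp only [Finset.mem_insert, Finset.mem_singleton]
      have hjv : ((idxN hn0 k.val : Fin n) : ℕ) = k.val % n := rfl
      by_cases hlt : k.val < n
      · left
        apply Fin.ext
        symm
        show ((idxN hn0 k.val : Fin n) : ℕ) % (2 * n) = k.val
        rw [hjv, Nat.mod_eq_of_lt hlt, Nat.mod_eq_of_lt (by omega)]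
      · right
        apply Fin.ext
        symm
        show (((idxN hn0 k.val : Fin n) : ℕ) + n) % (2 * n) = k.val
        have hk2 : k.val < 2 * n := k.isLt
        have hmm : k.val % n = k.val - n := by
          have h3 : k.val = (k.val - n) + n := by omega
          rw [h3, Nat.add_mod_right, Nat.mod_eq_of_lt (by omega)]
          omega
        rw [hjv, hmm, Nat.mod_eq_of_lt (by omega)]
        omega
    · simp only [Pi.evalMonoidHom_apply, Pi.mul_apply, Pi.mulSingle_eq_of_ne hki,
        Pi.mulSingle_eq_same, one_mul, inv_inv]

end SB
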